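/- Let 𝔥₊ be a closed subspace of L²(Ω), u₀ a unit vector orthogonal to 𝔥₊, and let U_N : ⊗_sym^N L²(Ω) → ⊕_{n=0}^N ⊗_sym^n 𝔥₊ map Ψ = Σ_{k=0}^N u₀^{⊗(N−k)} ⊗_s ψ_k (with ψ_k ∈ ⊗_sym^k 𝔥₊) to ψ₀ ⊕ ψ₁ ⊕ ⋯ ⊕ ψ_N. Then U_N is a well-defined unitary operator; in particular ⟨u₀^{⊗(N−k)} ⊗_s ψ_k, u₀^{⊗(N−ℓ)} ⊗_s ψ_ℓ⟩ = δ_{kℓ} ⟨ψ_k, ψ_ℓ⟩ and ‖Ψ‖² = Σ_{k=0}^N ‖ψ_k‖². -/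

import Mathlib

open MeasureTheory

/-- The vector `u₀^{⊗(N-k)} ⊗_s ψ ∈ ⊗_sym^N L²(Ω)` obtained by filling up an excitation
vector `ψ ∈ ⊗_sym^k 𝔥₊` with `N - k` particles in the condensate mode `u₀`:
`(u₀^{⊗(N-k)} ⊗_s ψ)(x₁,…,x_N) = ((N-k)! k! N!)^{-1/2}
   Σ_{σ ∈ S_N} u₀(x_{σ(1)})⋯u₀(x_{σ(N-k)}) ψ(x_{σ(N-k+1)},…,x_{σ(N)})`. -/
noncomputable def symTensor {Ω : Type*} (u₀ : Ω → ℂ) (N k : ℕ) (hk : k ≤ N)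
    (ψ : (Fin k → Ω) → ℂ) : (Fin N → Ω) → ℂ := fun x =>
  (((Real.sqrt ((Nat.factorial (N - k) * Nat.factorial k * Nat.factorial N : ℕ)))⁻¹ : ℝ) : ℂ) *
    ∑ σ : Equiv.Perm (Fin N),
      (∏ i : Fin (N - k), u₀ (x (σ (Fin.castLE (Nat.sub_le N k) i)))) *
        ψ (fun j => x (σ (Fin.cast (Nat.sub_add_cancel hk) (Fin.natAdd (N - k) j))))

open Function
open scoped ENNReal

namespace Stmt19A

theorem memℒp_conj {α : Type*} [MeasurableSpace α] {μ : Measure α} {f : α → ℂ} {p : ℝ≥0∞}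
    (hf : MemLp f p μ) : MemLp (fun x => (starRingEnd ℂ) (f x)) p μ := by
  refine MemLp.of_le hf (RCLike.continuous_conj.comp_aestronglyMeasurable hf.1) ?_
  exact Filter.Eventually.of_forall fun x => by simp

theorem integrable_mul_L2 {α : Type*} [MeasurableSpace α] {μ : Measure α} {f g : α → ℂ}
    (hf : MemLp f 2 μ) (hg : MemLp g 2 μ) : Integrable (fun x => f x * g x) μ := by
  have hf2 : Integrable (fun x => ‖f x‖ ^ 2) μ := (memLp_two_iff_integrable_sq_norm hf.1).1 hf
  have hg2 : Integrable (fun x => ‖g x‖ ^ 2) μ := (memLp_two_iff_integrable_sq_norm hg.1).1 hg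
  refine (((hf2.add hg2).div_const 2)).mono' (hf.1.mul hg.1) ?_
  refine Filter.Eventually.of_forall fun x => ?_
  simp only [norm_mul, Pi.add_apply]
  nlinarith [sq_nonneg (‖f x‖ - ‖g x‖), norm_nonneg (f x), norm_nonneg (g x)]

theorem memℒp_prod_mul {α β : Type*} [MeasurableSpace α] [MeasurableSpace β] {μ : Measure α}
    {ν : Measure β} [SigmaFinite μ] [SigmaFinite ν] {f : α → ℂ} {g : β → ℂ}
    (hf : MemLp f 2 μ) (hg : MemLp g 2 ν) :
    MemLp (fun z : α × β => f z.1 * g z.2) 2 (μ.prod ν) := by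
  have hfm : AEStronglyMeasurable (fun z : α × β => f z.1) (μ.prod ν) :=
    hf.1.comp_quasiMeasurePreserving Measure.quasiMeasurePreserving_fst
  have hgm : AEStronglyMeasurable (fun z : α × β => g z.2) (μ.prod ν) :=
    hg.1.comp_quasiMeasurePreserving Measure.quasiMeasurePreserving_snd
  have hm : AEStronglyMeasurable (fun z : α × β => f z.1 * g z.2) (μ.prod ν) := hfm.mul hgm
  rw [memLp_two_iff_integrable_sq_norm hm]
  have h := Integrable.mul_prod ((memLp_two_iff_integrable_sq_norm hf.1).1 hf)
    ((memLp_two_iff_integrable_sq_norm hg.1).1 hg) (μ := μ) (ν := ν)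
  refine h.congr (Filter.Eventually.of_forall fun z => ?_)
  simp [norm_mul, mul_pow]

end Stmt19A

namespace Stmt19B
open Stmt19A
set_option linter.unusedSectionVars false
set_option linter.unnecessarySimpa false

variable {Ω : Type*} [MeasureSpace Ω] [SigmaFinite (volume : Measure Ω)]

def E1 (N a : ℕ) : Fin (N - a) → Fin N := Fin.castLE (Nat.sub_le N a)

def E2 (N a : ℕ) (h : a ≤ N) : Fin a → Fin N :=
  fun j => Fin.cast (Nat.sub_add_cancel h) (Fin.natAdd (N - a) j)

lemma E1_val {N a : ℕ} (i : Fin (N - a)) : (E1 N a i).1 = i.1 := rfl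

lemma E2_val {N a : ℕ} (h : a ≤ N) (j : Fin a) : (E2 N a h j).1 = (N - a) + j.1 := rfl

lemma E1_inj {N a : ℕ} : Function.Injective (E1 N a) := fun i j hij => by
  have := congrArg Fin.val hij; exact Fin.ext this

lemma E2_inj {N a : ℕ} (h : a ≤ N) : Function.Injective (E2 N a h) := fun i j hij => by
  have := congrArg Fin.val hij; simp only [E2_val] at this; exact Fin.ext (by omega)

lemma E1_ne_E2 {N a : ℕ} (h : a ≤ N) (i : Fin (N - a)) (j : Fin a) :
    E1 N a i ≠ E2 N a h j := by
  intro hEq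
  have := congrArg Fin.val hEq
  simp only [E1_val, E2_val] at this
  have hi := i.2
  omega

lemma eq_E1_or_E2 (N a : ℕ) (h : a ≤ N) (x : Fin N) :
    (∃ i, x = E1 N a i) ∨ (∃ j, x = E2 N a h j) := by
  by_cases hx : x.1 < N - a
  · exact Or.inl ⟨⟨x.1, hx⟩, Fin.ext rfl⟩
  · have hx2 := x.2
    refine Or.inr ⟨⟨x.1 - (N - a), by omega⟩, Fin.ext ?_⟩
    simp only [E2_val]
    omega

def sumEquiv (N a : ℕ) (h : a ≤ N) : (Fin (N - a) ⊕ Fin a) ≃ Fin N :=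
  finSumFinEquiv.trans (finCongr (Nat.sub_add_cancel h))

lemma sumEquiv_inl {N a : ℕ} (h : a ≤ N) (i : Fin (N - a)) :
    sumEquiv N a h (Sum.inl i) = E1 N a i := by
  apply Fin.ext; simp [sumEquiv, E1_val]

lemma sumEquiv_inr {N a : ℕ} (h : a ≤ N) (j : Fin a) :
    sumEquiv N a h (Sum.inr j) = E2 N a h j := by
  apply Fin.ext; simp [sumEquiv, E2_val]

noncomputable def split (N a : ℕ) (h : a ≤ N) :
    ((Fin (N - a) → Ω) × (Fin a → Ω)) ≃ᵐ (Fin N → Ω) :=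
  (MeasurableEquiv.sumPiEquivProdPi (fun _ => Ω)).symm.trans
    (MeasurableEquiv.piCongrLeft (fun _ => Ω) (sumEquiv N a h))

lemma split_mp (N a : ℕ) (h : a ≤ N) :
    MeasurePreserving (split (Ω := Ω) N a h) volume volume := by
  have h1 := volume_measurePreserving_piCongrLeft
    (fun _ : Fin N => Ω) (sumEquiv N a h)
  have h2 := volume_measurePreserving_sumPiEquivProdPi_symm
    (fun _ : Fin (N - a) ⊕ Fin a => Ω)
  simpa [split, MeasurableEquiv.coe_trans] using h1.comp h2

lemma split_apply (N a : ℕ) (h : a ≤ N) (p : (Fin (N - a) → Ω) × (Fin a → Ω)) :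
    split N a h p = Equiv.piCongrLeft (fun _ => Ω) (sumEquiv N a h)
      ((Equiv.sumPiEquivProdPi (fun _ => Ω)).symm (p.1, p.2)) := by
  cases p; rfl

lemma split_E1 {N a : ℕ} (h : a ≤ N) (p : (Fin (N - a) → Ω) × (Fin a → Ω)) (i : Fin (N - a)) :
    split N a h p (E1 N a i) = p.1 i := by
  rw [split_apply, ← sumEquiv_inl h i]
  exact Equiv.piCongrLeft_sumInl (fun _ => Ω) (sumEquiv N a h) p.1 p.2 i

lemma split_E2 {N a : ℕ} (h : a ≤ N) (p : (Fin (N - a) → Ω) × (Fin a → Ω)) (j : Fin a) :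
    split N a h p (E2 N a h j) = p.2 j := by
  rw [split_apply, ← sumEquiv_inr h j]
  exact Equiv.piCongrLeft_sumInr (fun _ => Ω) (sumEquiv N a h) p.1 p.2 j

lemma split_comp {N a : ℕ} (h : a ≤ N) (x : Fin N → Ω) :
    split N a h (x ∘ E1 N a, x ∘ E2 N a h) = x := by
  funext z
  rcases eq_E1_or_E2 N a h z with ⟨i, rfl⟩ | ⟨j, rfl⟩
  · rw [split_E1]; rfl
  · rw [split_E2]; rfl

def compPerm {Ω : Type*} [MeasurableSpace Ω] (n : ℕ) (σ : Equiv.Perm (Fin n)) :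
    (Fin n → Ω) ≃ᵐ (Fin n → Ω) :=
  MeasurableEquiv.piCongrLeft (fun _ => Ω) σ.symm

lemma compPerm_apply {n : ℕ} (σ : Equiv.Perm (Fin n)) (x : Fin n → Ω) :
    compPerm n σ x = x ∘ σ := by
  funext b
  rw [compPerm, MeasurableEquiv.coe_piCongrLeft]
  have := Equiv.piCongrLeft_apply_apply (fun _ : Fin n => Ω) σ.symm x (σ b)
  simpa using this

lemma compPerm_mp {n : ℕ} (σ : Equiv.Perm (Fin n)) :
    MeasurePreserving (compPerm (Ω := Ω) n σ) volume volume :=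
  volume_measurePreserving_piCongrLeft _ _

end Stmt19B

namespace Stmt19C
open Stmt19A Stmt19B
set_option linter.unusedSectionVars false
set_option linter.unnecessarySimpa false

variable {Ω : Type*} [MeasureSpace Ω] [SigmaFinite (volume : Measure Ω)]

lemma split_symm_apply {N a : ℕ} (h : a ≤ N) (x : Fin N → Ω) :
    (split N a h).symm x = (x ∘ E1 N a, x ∘ E2 N a h) := by
  have h2 : split N a h (x ∘ E1 N a, x ∘ E2 N a h) = x := split_comp h x
  exact ((split N a h).toEquiv.symm_apply_eq).2 h2.symm

noncomputable def blk (u₀ : Ω → ℂ) (N a : ℕ) (h : a ≤ N) (χ : (Fin a → Ω) → ℂ)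
    (x : Fin N → Ω) : ℂ :=
  (∏ i : Fin (N - a), u₀ (x (E1 N a i))) * χ (x ∘ E2 N a h)

lemma aesm_eval {n : ℕ} {f : Ω → ℂ} (hf : AEStronglyMeasurable f volume) (i : Fin n) :
    AEStronglyMeasurable (fun x : Fin n → Ω => f (x i)) volume := by
  refine AEStronglyMeasurable.comp_quasiMeasurePreserving hf ?_
  refine ⟨measurable_pi_apply i, ?_⟩
  refine Measure.AbsolutelyContinuous.mk fun s hs h0 => ?_
  rw [Measure.map_apply (measurable_pi_apply i) hs]
  exact Measure.pi_eval_preimage_null _ h0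

lemma memℒp_uprod {n : ℕ} {f : Ω → ℂ} (hf : MemLp f 2) :
    MemLp (fun x : Fin n → Ω => ∏ i, f (x i)) 2 := by
  have hm : AEStronglyMeasurable (fun x : Fin n → Ω => ∏ i, f (x i)) volume :=
    Finset.aestronglyMeasurable_fun_prod _ (fun i _ => aesm_eval hf.1 i)
  rw [memLp_two_iff_integrable_sq_norm hm]
  have h2 : Integrable (fun y => ‖f y‖ ^ 2) volume := (memLp_two_iff_integrable_sq_norm hf.1).1 hf
  have hI := Integrable.fintype_prod (f := fun _ : Fin n => fun y => ‖f y‖ ^ 2) (fun _ => h2)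
  refine hI.congr (Filter.Eventually.of_forall fun x => ?_)
  simp [norm_prod, Finset.prod_pow]

lemma memℒp_blk {N a : ℕ} (h : a ≤ N) {u₀ : Ω → ℂ} (hu : MemLp u₀ 2)
    {χ : (Fin a → Ω) → ℂ} (hχ : MemLp χ 2) : MemLp (blk u₀ N a h χ) 2 := by
  have ht := memℒp_prod_mul (memℒp_uprod (n := N - a) hu) hχ
  rw [← MeasureTheory.Measure.volume_eq_prod] at ht
  have hcomp := ht.comp_measurePreserving ((split_mp N a h).symm)
  have heq : (fun p : (Fin (N - a) → Ω) × (Fin a → Ω) => (∏ i, u₀ (p.1 i)) * χ p.2)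
      ∘ (split N a h).symm = blk u₀ N a h χ := by
    funext x
    simp [Function.comp, split_symm_apply, blk]
  rwa [heq] at hcomp

lemma integral_blk_pair {N a : ℕ} (h : a ≤ N) (f : Ω → ℂ) (g : (Fin a → Ω) → ℂ) :
    ∫ x : Fin N → Ω, (∏ i, f (x (E1 N a i))) * g (x ∘ E2 N a h)
      = (∫ y, f y) ^ (N - a) * ∫ v, g v := by
  rw [← (split_mp N a h).integral_comp']
  have heq : ∀ p : (Fin (N - a) → Ω) × (Fin a → Ω),
      (∏ i, f ((split N a h p) (E1 N a i))) * g ((split N a h p) ∘ E2 N a h)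
        = (∏ i, f (p.1 i)) * g p.2 := by
    intro p
    congr 1
    · exact Finset.prod_congr rfl fun i _ => by rw [split_E1]
    · exact congrArg g (funext fun j => split_E2 h p j)
  simp_rw [heq]
  rw [MeasureTheory.Measure.volume_eq_prod,
    integral_prod_mul (fun A : Fin (N - a) → Ω => ∏ i, f (A i)) g,
    MeasureTheory.volume_pi, integral_fintype_prod_eq_pow (ι := Fin (N - a)) f, Fintype.card_fin]

end Stmt19C

namespace Stmt19D
open Stmt19A Stmt19B Stmt19C
set_option linter.unusedSectionVars false
set_option linter.unnecessarySimpa false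

variable {Ω : Type*} [MeasureSpace Ω] [SigmaFinite (volume : Measure Ω)]

lemma integral_eq_zero_of_slice {N : ℕ} (F : (Fin N → Ω) → ℂ) (hF : Integrable F volume)
    (j : Fin N) (h0 : ∀ x : Fin N → Ω, (∫ y, F (Function.update x j y)) = 0) :
    ∫ x, F x = 0 := by
  classical
  obtain ⟨n, rfl⟩ : ∃ n, N = n + 1 := ⟨N - 1, by have := j.2; omega⟩
  by_cases hΩ : Nonempty Ω
  swap
  · haveI : IsEmpty Ω := not_nonempty_iff.1 hΩ
    haveI : IsEmpty (Fin (n + 1) → Ω) := ⟨fun x => IsEmpty.false (x j)⟩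
    exact integral_of_isEmpty
  obtain ⟨y₀⟩ := hΩ
  set e := MeasurableEquiv.piFinSuccAbove (fun _ : Fin (n + 1) => Ω) j with he
  have mp : MeasurePreserving e volume volume :=
    volume_preserving_piFinSuccAbove (fun _ : Fin (n + 1) => Ω) j
  have key : ∀ (y : Ω) (r : Fin n → Ω),
      e.symm (y, r) = Function.update (e.symm (y₀, r)) j y := by
    intro y r
    show (Fin.insertNthEquiv (fun _ => Ω) j) (y, r)
        = Function.update ((Fin.insertNthEquiv (fun _ => Ω) j) (y₀, r)) j y
    simp [Fin.insertNthEquiv, Fin.update_insertNth]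
  have hFe : Integrable (fun z : Ω × (Fin n → Ω) => F (e.symm z)) volume :=
    ((mp.symm).integrable_comp_emb (e.symm.measurableEmbedding)).2 hF
  have step1 : ∫ x, F x = ∫ z : Ω × (Fin n → Ω), F (e.symm z) :=
    ((mp.symm).integral_comp' F).symm
  rw [step1]
  rw [MeasureTheory.Measure.volume_eq_prod] at hFe ⊢
  rw [integral_prod_symm _ hFe]
  have hz : ∀ r : Fin n → Ω, ∫ y, F (e.symm (y, r)) = 0 := by
    intro r
    calc ∫ y, F (e.symm (y, r)) = ∫ y, F (Function.update (e.symm (y₀, r)) j y) :=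
          integral_congr_ae (Filter.Eventually.of_forall fun y => congrArg F (key y r))
      _ = 0 := h0 _
  simp_rw [hz]
  simp

end Stmt19D

namespace Stmt19E
open Stmt19A Stmt19B Stmt19C Stmt19D
set_option linter.unusedSectionVars false
set_option linter.unnecessarySimpa false

variable {Ω : Type*} [MeasureSpace Ω] [SigmaFinite (volume : Measure Ω)]

lemma update_comp_eq_update {N b : ℕ} (g : Fin b → Fin N) (hg : Function.Injective g)
    (x : Fin N → Ω) (t : Fin b) (y : Ω) :
    (Function.update x (g t) y) ∘ g = Function.update (x ∘ g) t y := by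
  funext s
  by_cases hs : s = t
  · subst hs; simp
  · simp only [Function.comp_apply, Function.update_of_ne hs,
      Function.update_of_ne (fun hc => hs (hg hc))]

lemma comp_update_of_ne {N b : ℕ} (g : Fin b → Fin N) (x : Fin N → Ω) (j : Fin N) (y : Ω)
    (h : ∀ s, g s ≠ j) : (Function.update x j y) ∘ g = x ∘ g :=
  funext fun s => Function.update_of_ne (h s) _ _

lemma prod_update {n N : ℕ} (g : Fin n → Fin N) (hg : Function.Injective g) (u : Ω → ℂ)
    (x : Fin N → Ω) (i₀ : Fin n) (y : Ω) :
    (∏ i, u (Function.update x (g i₀) y (g i)))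
      = u y * ∏ i ∈ Finset.univ.erase i₀, u (x (g i)) := by
  rw [← Finset.mul_prod_erase Finset.univ _ (Finset.mem_univ i₀)]
  congr 1
  · rw [Function.update_self]
  · refine Finset.prod_congr rfl fun i hi => ?_
    rw [Function.update_of_ne (fun hc => (Finset.ne_of_mem_erase hi) (hg hc))]

lemma prod_update_of_ne {n N : ℕ} (g : Fin n → Fin N) (u : Ω → ℂ) (x : Fin N → Ω) (j : Fin N)
    (y : Ω) (h : ∀ i, g i ≠ j) :
    (∏ i, u (Function.update x j y (g i))) = ∏ i, u (x (g i)) :=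
  Finset.prod_congr rfl fun i _ => by rw [Function.update_of_ne (h i)]

noncomputable def itg (u₀ : Ω → ℂ) (N a b : ℕ) (ha : a ≤ N) (hb : b ≤ N)
    (χa : (Fin a → Ω) → ℂ) (χb : (Fin b → Ω) → ℂ) (π : Equiv.Perm (Fin N))
    (x : Fin N → Ω) : ℂ :=
  (starRingEnd ℂ) (blk u₀ N a ha χa x) * blk u₀ N b hb χb (x ∘ π)

lemma memℒp_blk_comp {N b : ℕ} (hb : b ≤ N) {u₀ : Ω → ℂ} (hu : MemLp u₀ 2)
    {χb : (Fin b → Ω) → ℂ} (hχb : MemLp χb 2) (π : Equiv.Perm (Fin N)) :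
    MemLp (fun x : Fin N → Ω => blk u₀ N b hb χb (x ∘ π)) 2 := by
  have h := (memℒp_blk hb hu hχb).comp_measurePreserving (compPerm_mp (Ω := Ω) π)
  have heq : blk u₀ N b hb χb ∘ (compPerm N π) = fun x : Fin N → Ω => blk u₀ N b hb χb (x ∘ π) := by
    funext x; simp [Function.comp, compPerm_apply]
  rwa [heq] at h

lemma integrable_itg {N a b : ℕ} (ha : a ≤ N) (hb : b ≤ N) {u₀ : Ω → ℂ}
    {χa : (Fin a → Ω) → ℂ} {χb : (Fin b → Ω) → ℂ} (hu : MemLp u₀ 2) (hχa : MemLp χa 2)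
    (hχb : MemLp χb 2) (π : Equiv.Perm (Fin N)) :
    Integrable (itg u₀ N a b ha hb χa χb π) volume :=
  integrable_mul_L2 (memℒp_conj (memℒp_blk ha hu hχa)) (memℒp_blk_comp hb hu hχb π)

lemma vanish_A {N a b : ℕ} (ha : a ≤ N) (hb : b ≤ N) {u₀ : Ω → ℂ} {χa : (Fin a → Ω) → ℂ}
    {χb : (Fin b → Ω) → ℂ} (hu : MemLp u₀ 2) (hχa : MemLp χa 2) (hχb : MemLp χb 2)
    (π : Equiv.Perm (Fin N)) (i₀ : Fin (N - b)) (t : Fin a)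
    (hj : π (E1 N b i₀) = E2 N a ha t)
    (horth : ∀ (i : Fin a) (v : Fin a → Ω),
      (∫ y, (starRingEnd ℂ) (u₀ y) * χa (Function.update v i y)) = 0) :
    ∫ x, itg u₀ N a b ha hb χa χb π x = 0 := by
  apply integral_eq_zero_of_slice _ (integrable_itg ha hb hu hχa hχb π) (E2 N a ha t)
  intro x
  have hginj : Function.Injective (fun i : Fin (N - b) => π (E1 N b i)) :=
    fun i1 i2 hc => E1_inj (π.injective hc)
  have hslice : ∀ y, itg u₀ N a b ha hb χa χb π (Function.update x (E2 N a ha t) y)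
      = ((starRingEnd ℂ) (∏ i, u₀ (x (E1 N a i))) *
          ((∏ i ∈ Finset.univ.erase i₀, u₀ (x (π (E1 N b i)))) *
            χb ((x ∘ π) ∘ E2 N b hb))) *
        (u₀ y * (starRingEnd ℂ) (χa (Function.update (x ∘ E2 N a ha) t y))) := by
    intro y
    unfold itg blk
    rw [prod_update_of_ne (E1 N a) u₀ x _ y (fun i => E1_ne_E2 ha i t)]
    rw [update_comp_eq_update (E2 N a ha) (E2_inj ha) x t y]
    have h3 : (∏ i, u₀ ((Function.update x (E2 N a ha t) y ∘ π) (E1 N b i)))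
        = u₀ y * ∏ i ∈ Finset.univ.erase i₀, u₀ (x (π (E1 N b i))) := by
      have h := prod_update (fun i => π (E1 N b i)) hginj u₀ x i₀ y
      rw [hj] at h
      simpa using h
    rw [h3]
    have h4 : ((Function.update x (E2 N a ha t) y ∘ π) ∘ E2 N b hb) = (x ∘ π) ∘ E2 N b hb := by
      funext s
      simp only [Function.comp_apply]
      rw [Function.update_of_ne]
      intro hc
      have hc2 : π (E2 N b hb s) = π (E1 N b i₀) := by rw [hc, hj]
      exact E1_ne_E2 hb i₀ s (π.injective hc2).symm
    rw [h4, map_mul]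
    ring
  simp_rw [hslice]
  rw [integral_const_mul]
  have h5 : ∀ y, u₀ y * (starRingEnd ℂ) (χa (Function.update (x ∘ E2 N a ha) t y))
      = (starRingEnd ℂ) ((starRingEnd ℂ) (u₀ y) * χa (Function.update (x ∘ E2 N a ha) t y)) := by
    intro y; rw [map_mul, RCLike.conj_conj]
  simp_rw [h5]
  rw [integral_conj, horth t (x ∘ E2 N a ha), map_zero, mul_zero]

lemma vanish_B {N a b : ℕ} (ha : a ≤ N) (hb : b ≤ N) {u₀ : Ω → ℂ} {χa : (Fin a → Ω) → ℂ}
    {χb : (Fin b → Ω) → ℂ} (hu : MemLp u₀ 2) (hχa : MemLp χa 2) (hχb : MemLp χb 2)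
    (π : Equiv.Perm (Fin N)) (i₀ : Fin (N - a)) (t : Fin b)
    (hj : π (E2 N b hb t) = E1 N a i₀)
    (hno : ∀ i : Fin (N - b), π (E1 N b i) ≠ E1 N a i₀)
    (horth : ∀ (i : Fin b) (v : Fin b → Ω),
      (∫ y, (starRingEnd ℂ) (u₀ y) * χb (Function.update v i y)) = 0) :
    ∫ x, itg u₀ N a b ha hb χa χb π x = 0 := by
  apply integral_eq_zero_of_slice _ (integrable_itg ha hb hu hχa hχb π) (E1 N a i₀)
  intro x
  have hslice : ∀ y, itg u₀ N a b ha hb χa χb π (Function.update x (E1 N a i₀) y)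
      = (((starRingEnd ℂ) (∏ i ∈ Finset.univ.erase i₀, u₀ (x (E1 N a i)))) *
          ((starRingEnd ℂ) (χa (x ∘ E2 N a ha))) * (∏ i, u₀ (x (π (E1 N b i))))) *
        ((starRingEnd ℂ) (u₀ y) * χb (Function.update ((x ∘ π) ∘ E2 N b hb) t y)) := by
    intro y
    unfold itg blk
    rw [prod_update (E1 N a) E1_inj u₀ x i₀ y]
    rw [comp_update_of_ne (E2 N a ha) x _ y (fun s hc => E1_ne_E2 ha i₀ s hc.symm)]
    have h3 : (∏ i, u₀ ((Function.update x (E1 N a i₀) y ∘ π) (E1 N b i)))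
        = ∏ i, u₀ (x (π (E1 N b i))) := by
      have h := prod_update_of_ne (fun i => π (E1 N b i)) u₀ x (E1 N a i₀) y hno
      simpa using h
    rw [h3]
    have h4 : ((Function.update x (E1 N a i₀) y ∘ π) ∘ E2 N b hb)
        = Function.update ((x ∘ π) ∘ E2 N b hb) t y := by
      funext s
      by_cases hs : s = t
      · subst hs
        simp only [Function.comp_apply]
        rw [hj, Function.update_self, Function.update_self]
      · have hne : π (E2 N b hb s) ≠ E1 N a i₀ := by
          intro hc
          have : π (E2 N b hb s) = π (E2 N b hb t) := by rw [hc, hj]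
          exact hs (E2_inj hb (π.injective this))
        simp only [Function.comp_apply, Function.update_of_ne hne, Function.update_of_ne hs]
    rw [h4, map_mul, map_mul]
    ring
  simp_rw [hslice]
  rw [integral_const_mul, horth t (((x ∘ π) ∘ E2 N b hb)), mul_zero]

end Stmt19E

namespace Stmt19F
open Stmt19A Stmt19B Stmt19C Stmt19D Stmt19E
set_option linter.unusedSectionVars false
set_option linter.unnecessarySimpa false

variable {Ω : Type*} [MeasureSpace Ω] [SigmaFinite (volume : Measure Ω)]

noncomputable def perm1 {N k : ℕ} (π : Equiv.Perm (Fin N))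
    (hπ : ∀ i : Fin (N - k), (π (E1 N k i)).1 < N - k) : Equiv.Perm (Fin (N - k)) :=
  Equiv.ofBijective (fun i => ⟨(π (E1 N k i)).1, hπ i⟩)
    (Finite.injective_iff_bijective.1 (by
      intro i1 i2 hc
      have hv : (π (E1 N k i1)).1 = (π (E1 N k i2)).1 := by
        simpa using congrArg Fin.val hc
      exact E1_inj (π.injective (Fin.ext hv))))

lemma perm1_spec {N k : ℕ} (π : Equiv.Perm (Fin N))
    (hπ : ∀ i : Fin (N - k), (π (E1 N k i)).1 < N - k) (i : Fin (N - k)) :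
    E1 N k (perm1 π hπ i) = π (E1 N k i) := Fin.ext rfl

lemma stab_E2 {N k : ℕ} (hk : k ≤ N) (π : Equiv.Perm (Fin N))
    (hπ : ∀ i : Fin (N - k), (π (E1 N k i)).1 < N - k) (j : Fin k) :
    N - k ≤ (π (E2 N k hk j)).1 := by
  by_contra hlt
  push_neg at hlt
  obtain ⟨i, hi⟩ := (perm1 π hπ).surjective ⟨(π (E2 N k hk j)).1, hlt⟩
  have h1 : π (E1 N k i) = π (E2 N k hk j) := by
    have h2 := perm1_spec π hπ i
    rw [hi] at h2
    rw [← h2]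
    exact Fin.ext rfl
  exact E1_ne_E2 hk i j (π.injective h1)

noncomputable def perm2 {N k : ℕ} (hk : k ≤ N) (π : Equiv.Perm (Fin N))
    (hπ : ∀ i : Fin (N - k), (π (E1 N k i)).1 < N - k) : Equiv.Perm (Fin k) :=
  Equiv.ofBijective (fun j => ⟨(π (E2 N k hk j)).1 - (N - k), by
      have h1 := (π (E2 N k hk j)).2
      have h2 := stab_E2 hk π hπ j
      omega⟩)
    (Finite.injective_iff_bijective.1 (by
      intro j1 j2 hc
      have hv := congrArg Fin.val hc
      simp only at hv
      have h1 := stab_E2 hk π hπ j1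
      have h2 := stab_E2 hk π hπ j2
      have : (π (E2 N k hk j1)).1 = (π (E2 N k hk j2)).1 := by omega
      exact E2_inj hk (π.injective (Fin.ext this))))

lemma perm2_spec {N k : ℕ} (hk : k ≤ N) (π : Equiv.Perm (Fin N))
    (hπ : ∀ i : Fin (N - k), (π (E1 N k i)).1 < N - k) (j : Fin k) :
    E2 N k hk (perm2 hk π hπ j) = π (E2 N k hk j) := by
  have h2 := stab_E2 hk π hπ j
  apply Fin.ext
  show (N - k) + ((π (E2 N k hk j)).1 - (N - k)) = (π (E2 N k hk j)).1
  omega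

lemma permCongr_E1 {N k : ℕ} (hk : k ≤ N) (p1 : Equiv.Perm (Fin (N - k)))
    (p2 : Equiv.Perm (Fin k)) (i : Fin (N - k)) :
    (sumEquiv N k hk).permCongr (Equiv.sumCongr p1 p2) (E1 N k i) = E1 N k (p1 i) := by
  rw [← sumEquiv_inl hk i, Equiv.permCongr_apply, Equiv.symm_apply_apply]
  simp [sumEquiv_inl]

lemma permCongr_E2 {N k : ℕ} (hk : k ≤ N) (p1 : Equiv.Perm (Fin (N - k)))
    (p2 : Equiv.Perm (Fin k)) (j : Fin k) :
    (sumEquiv N k hk).permCongr (Equiv.sumCongr p1 p2) (E2 N k hk j) = E2 N k hk (p2 j) := by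
  rw [← sumEquiv_inr hk j, Equiv.permCongr_apply, Equiv.symm_apply_apply]
  simp [sumEquiv_inr]

noncomputable def stabEquiv (N k : ℕ) (hk : k ≤ N) :
    (Equiv.Perm (Fin (N - k)) × Equiv.Perm (Fin k)) ≃
      {π : Equiv.Perm (Fin N) // ∀ i : Fin (N - k), (π (E1 N k i)).1 < N - k} where
  toFun p := ⟨(sumEquiv N k hk).permCongr (Equiv.sumCongr p.1 p.2), by
    intro i
    rw [permCongr_E1 hk p.1 p.2 i]
    exact (p.1 i).2⟩
  invFun q := (perm1 q.1 q.2, perm2 hk q.1 q.2)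
  left_inv p := by
    obtain ⟨p1, p2⟩ := p
    ext i
    · have h := perm1_spec ((sumEquiv N k hk).permCongr (Equiv.sumCongr p1 p2))
        (fun i => by rw [permCongr_E1 hk p1 p2 i]; exact (p1 i).2) i
      rw [permCongr_E1 hk p1 p2 i] at h
      exact congrArg Fin.val (E1_inj h)
    · have h := perm2_spec hk ((sumEquiv N k hk).permCongr (Equiv.sumCongr p1 p2))
        (fun i => by rw [permCongr_E1 hk p1 p2 i]; exact (p1 i).2) i
      rw [permCongr_E2 hk p1 p2 i] at h
      exact congrArg Fin.val (E2_inj hk h)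
  right_inv q := by
    obtain ⟨π, hπ⟩ := q
    apply Subtype.ext
    apply Equiv.ext
    intro x
    rcases eq_E1_or_E2 N k hk x with ⟨i, rfl⟩ | ⟨j, rfl⟩
    · show (sumEquiv N k hk).permCongr
        (Equiv.sumCongr (perm1 π hπ) (perm2 hk π hπ)) (E1 N k i) = π (E1 N k i)
      rw [permCongr_E1, perm1_spec]
    · show (sumEquiv N k hk).permCongr
        (Equiv.sumCongr (perm1 π hπ) (perm2 hk π hπ)) (E2 N k hk j) = π (E2 N k hk j)
      rw [permCongr_E2, perm2_spec]

lemma card_stab (N k : ℕ) (hk : k ≤ N) [DecidablePred fun π : Equiv.Perm (Fin N) =>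
      ∀ i : Fin (N - k), (π (E1 N k i)).1 < N - k] :
    (Finset.univ.filter (fun π : Equiv.Perm (Fin N) =>
        ∀ i : Fin (N - k), (π (E1 N k i)).1 < N - k)).card
      = (N - k).factorial * k.factorial := by
  rw [← Fintype.card_subtype]
  rw [← Fintype.card_congr (stabEquiv N k hk)]
  simp [Fintype.card_perm]

end Stmt19F

namespace Stmt19G
open Stmt19A Stmt19B Stmt19C Stmt19D Stmt19E Stmt19F
set_option linter.unusedSectionVars false
set_option linter.unnecessarySimpa false

variable {Ω : Type*} [MeasureSpace Ω] [SigmaFinite (volume : Measure Ω)]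

lemma diag_value {N k : ℕ} (hk : k ≤ N) {u₀ : Ω → ℂ} {χa χb : (Fin k → Ω) → ℂ}
    (hbsym : ∀ (σ : Equiv.Perm (Fin k)) v, χb (v ∘ σ) = χb v)
    (π : Equiv.Perm (Fin N)) (hπ : ∀ i : Fin (N - k), (π (E1 N k i)).1 < N - k) :
    ∫ x, itg u₀ N k k hk hk χa χb π x
      = (∫ y, (starRingEnd ℂ) (u₀ y) * u₀ y) ^ (N - k)
        * ∫ v, (starRingEnd ℂ) (χa v) * χb v := by
  have key : ∀ x : Fin N → Ω, itg u₀ N k k hk hk χa χb π x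
      = (∏ i, ((starRingEnd ℂ) (u₀ (x (E1 N k i))) * u₀ (x (E1 N k i)))) *
        ((starRingEnd ℂ) (χa (x ∘ E2 N k hk)) * χb (x ∘ E2 N k hk)) := by
    intro x
    unfold itg blk
    have h1 : (∏ i, u₀ ((x ∘ π) (E1 N k i))) = ∏ i, u₀ (x (E1 N k i)) := by
      calc (∏ i, u₀ ((x ∘ π) (E1 N k i)))
          = ∏ i, u₀ (x (E1 N k (perm1 π hπ i))) := by
            refine Finset.prod_congr rfl fun i _ => ?_
            rw [Function.comp_apply, perm1_spec]
        _ = ∏ i, u₀ (x (E1 N k i)) :=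
            Equiv.prod_comp (perm1 π hπ) (fun i => u₀ (x (E1 N k i)))
    have h2 : ((x ∘ π) ∘ E2 N k hk) = (x ∘ E2 N k hk) ∘ (perm2 hk π hπ) := by
      funext s
      simp only [Function.comp_apply]
      rw [← perm2_spec hk π hπ s]
    rw [h1, h2, hbsym (perm2 hk π hπ) (x ∘ E2 N k hk), map_mul]
    rw [map_prod, Finset.prod_mul_distrib]
    ring
  simp_rw [key]
  exact integral_blk_pair hk (fun y => (starRingEnd ℂ) (u₀ y) * u₀ y)
    (fun v => (starRingEnd ℂ) (χa v) * χb v)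

lemma offdiag_vanish {N a b : ℕ} (ha : a ≤ N) (hb : b ≤ N) {u₀ : Ω → ℂ}
    {χa : (Fin a → Ω) → ℂ} {χb : (Fin b → Ω) → ℂ} (hu : MemLp u₀ 2) (hχa : MemLp χa 2)
    (hχb : MemLp χb 2)
    (hortha : ∀ (i : Fin a) (v : Fin a → Ω),
      (∫ y, (starRingEnd ℂ) (u₀ y) * χa (Function.update v i y)) = 0)
    (horthb : ∀ (i : Fin b) (v : Fin b → Ω),
      (∫ y, (starRingEnd ℂ) (u₀ y) * χb (Function.update v i y)) = 0)
    (hab : a ≠ b) (π : Equiv.Perm (Fin N)) :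
    ∫ x, itg u₀ N a b ha hb χa χb π x = 0 := by
  rcases Nat.lt_or_ge b a with hba | hba
  · -- b < a : some ket u₀ slot is a bra χa slot ⇒ vanish_A
    have hex : ∃ i₀ : Fin (N - b), ¬ (π (E1 N b i₀)).1 < N - a := by
      by_contra hall
      push_neg at hall
      have hinj : Function.Injective (fun i : Fin (N - b) => (⟨(π (E1 N b i)).1, hall i⟩ : Fin (N - a))) := by
        intro i1 i2 hc
        have hv : (π (E1 N b i1)).1 = (π (E1 N b i2)).1 := by simpa using congrArg Fin.val hc
        exact E1_inj (π.injective (Fin.ext hv))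
      have hcard := Fintype.card_le_of_injective _ hinj
      simp only [Fintype.card_fin] at hcard
      omega
    obtain ⟨i₀, hi₀⟩ := hex
    rcases eq_E1_or_E2 N a ha (π (E1 N b i₀)) with ⟨i, hi⟩ | ⟨t, ht⟩
    · exact absurd (by rw [hi]; exact i.2) hi₀
    · exact vanish_A ha hb hu hχa hχb π i₀ t ht hortha
  · -- a < b : some bra u₀ slot is not a ket u₀ slot ⇒ vanish_B
    have hab' : a < b := by omega
    have hex : ∃ i₀ : Fin (N - a), ∀ i : Fin (N - b), π (E1 N b i) ≠ E1 N a i₀ := by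
      by_contra hall
      push_neg at hall
      choose g hg using hall
      have hinj : Function.Injective g := by
        intro i1 i2 hc
        have : E1 N a i1 = E1 N a i2 := by rw [← hg i1, ← hg i2, hc]
        exact E1_inj this
      have hcard := Fintype.card_le_of_injective g hinj
      simp only [Fintype.card_fin] at hcard
      omega
    obtain ⟨i₀, hi₀⟩ := hex
    rcases eq_E1_or_E2 N b hb (π.symm (E1 N a i₀)) with ⟨i, hi⟩ | ⟨t, ht⟩
    · exfalso
      apply hi₀ i
      rw [← hi, Equiv.apply_symm_apply]
    · refine vanish_B ha hb hu hχa hχb π i₀ t ?_ hi₀ horthb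
      rw [← ht, Equiv.apply_symm_apply]

lemma nonstab_vanish {N k : ℕ} (hk : k ≤ N) {u₀ : Ω → ℂ} {χa χb : (Fin k → Ω) → ℂ}
    (hu : MemLp u₀ 2) (hχa : MemLp χa 2) (hχb : MemLp χb 2)
    (hortha : ∀ (i : Fin k) (v : Fin k → Ω),
      (∫ y, (starRingEnd ℂ) (u₀ y) * χa (Function.update v i y)) = 0)
    (π : Equiv.Perm (Fin N)) (hπ : ¬ ∀ i : Fin (N - k), (π (E1 N k i)).1 < N - k) :
    ∫ x, itg u₀ N k k hk hk χa χb π x = 0 := by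
  push_neg at hπ
  obtain ⟨i₀, hi₀⟩ := hπ
  rcases eq_E1_or_E2 N k hk (π (E1 N k i₀)) with ⟨i, hi⟩ | ⟨t, ht⟩
  · have : (π (E1 N k i₀)).1 < N - k := by rw [hi]; exact i.2
    omega
  · exact vanish_A hk hk hu hχa hχb π i₀ t ht hortha

end Stmt19G

namespace Stmt19H
open Stmt19A Stmt19B Stmt19C Stmt19D Stmt19E Stmt19F Stmt19G
set_option linter.unusedSectionVars false
set_option linter.unnecessarySimpa false

variable {Ω : Type*} [MeasureSpace Ω] [SigmaFinite (volume : Measure Ω)]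

lemma symTensor_apply (u₀ : Ω → ℂ) (N a : ℕ) (ha : a ≤ N) (χ : (Fin a → Ω) → ℂ)
    (x : Fin N → Ω) :
    symTensor u₀ N a ha χ x
      = (((Real.sqrt ((Nat.factorial (N - a) * Nat.factorial a * Nat.factorial N : ℕ)))⁻¹ : ℝ) : ℂ)
        * ∑ σ : Equiv.Perm (Fin N), blk u₀ N a ha χ (x ∘ σ) := rfl

lemma change_var {N a b : ℕ} (ha : a ≤ N) (hb : b ≤ N) (u₀ : Ω → ℂ)
    (χa : (Fin a → Ω) → ℂ) (χb : (Fin b → Ω) → ℂ) (σ τ : Equiv.Perm (Fin N)) :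
    ∫ x : Fin N → Ω, (starRingEnd ℂ) (blk u₀ N a ha χa (x ∘ σ)) * blk u₀ N b hb χb (x ∘ τ)
      = ∫ x, itg u₀ N a b ha hb χa χb (σ⁻¹ * τ) x := by
  rw [← (compPerm_mp (Ω := Ω) σ⁻¹).integral_comp'
    (fun x => (starRingEnd ℂ) (blk u₀ N a ha χa (x ∘ σ)) * blk u₀ N b hb χb (x ∘ τ))]
  refine integral_congr_ae (Filter.Eventually.of_forall fun x => ?_)
  simp only [compPerm_apply]
  unfold itg
  have h1 : (x ∘ ⇑(σ⁻¹)) ∘ ⇑σ = x := funext fun i => congrArg x (σ.symm_apply_apply i)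
  have h2 : (x ∘ ⇑(σ⁻¹)) ∘ ⇑τ = x ∘ ⇑(σ⁻¹ * τ) := funext fun i => rfl
  rw [h1, h2]

lemma reduce {N a b : ℕ} (ha : a ≤ N) (hb : b ≤ N) {u₀ : Ω → ℂ} {χa : (Fin a → Ω) → ℂ}
    {χb : (Fin b → Ω) → ℂ} (hu : MemLp u₀ 2) (hχa : MemLp χa 2) (hχb : MemLp χb 2) :
    ∫ x : Fin N → Ω, (starRingEnd ℂ) (symTensor u₀ N a ha χa x) * symTensor u₀ N b hb χb x
      = (((Real.sqrt ((Nat.factorial (N - a) * Nat.factorial a * Nat.factorial N : ℕ)))⁻¹ : ℝ) : ℂ)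
        * (((Real.sqrt ((Nat.factorial (N - b) * Nat.factorial b * Nat.factorial N : ℕ)))⁻¹ : ℝ) : ℂ)
        * ((N.factorial : ℂ)
            * ∑ π : Equiv.Perm (Fin N), ∫ x, itg u₀ N a b ha hb χa χb π x) := by
  have hJ : ∀ σ τ : Equiv.Perm (Fin N), Integrable
      (fun x : Fin N → Ω =>
        (starRingEnd ℂ) (blk u₀ N a ha χa (x ∘ σ)) * blk u₀ N b hb χb (x ∘ τ)) volume :=
    fun σ τ => integrable_mul_L2 (memℒp_conj (memℒp_blk_comp ha hu hχa σ))
      (memℒp_blk_comp hb hu hχb τ)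
  have hpt : ∀ x : Fin N → Ω,
      (starRingEnd ℂ) (symTensor u₀ N a ha χa x) * symTensor u₀ N b hb χb x
      = (((Real.sqrt ((Nat.factorial (N - a) * Nat.factorial a * Nat.factorial N : ℕ)))⁻¹ : ℝ) : ℂ)
        * (((Real.sqrt ((Nat.factorial (N - b) * Nat.factorial b * Nat.factorial N : ℕ)))⁻¹ : ℝ) : ℂ)
        * ∑ σ : Equiv.Perm (Fin N), ∑ τ : Equiv.Perm (Fin N),
            (starRingEnd ℂ) (blk u₀ N a ha χa (x ∘ σ)) * blk u₀ N b hb χb (x ∘ τ) := by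
    intro x
    rw [symTensor_apply, symTensor_apply, map_mul, map_sum, Complex.conj_ofReal,
      mul_mul_mul_comm, Finset.sum_mul_sum]
  simp_rw [hpt]
  rw [integral_const_mul]
  rw [integral_finset_sum _ (fun σ _ => integrable_finset_sum _ (fun τ _ => hJ σ τ))]
  have hin : ∀ σ : Equiv.Perm (Fin N),
      (∫ x : Fin N → Ω, ∑ τ : Equiv.Perm (Fin N),
        (starRingEnd ℂ) (blk u₀ N a ha χa (x ∘ σ)) * blk u₀ N b hb χb (x ∘ τ))
      = ∑ π : Equiv.Perm (Fin N), ∫ x, itg u₀ N a b ha hb χa χb π x := by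
    intro σ
    rw [integral_finset_sum _ (fun τ _ => hJ σ τ)]
    have := Fintype.sum_equiv (Equiv.mulLeft σ)
      (fun π : Equiv.Perm (Fin N) => ∫ x, itg u₀ N a b ha hb χa χb π x)
      (fun τ : Equiv.Perm (Fin N) => ∫ x : Fin N → Ω,
        (starRingEnd ℂ) (blk u₀ N a ha χa (x ∘ σ)) * blk u₀ N b hb χb (x ∘ τ))
      (fun π => by
        simp only [Equiv.coe_mulLeft]
        rw [change_var ha hb u₀ χa χb σ (σ * π), inv_mul_cancel_left])
    exact this.symm
  simp_rw [hin]
  rw [Finset.sum_const, Finset.card_univ, Fintype.card_perm, Fintype.card_fin, nsmul_eq_mul]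

end Stmt19H

namespace Stmt19I
open Stmt19A Stmt19B Stmt19C Stmt19D Stmt19E Stmt19F Stmt19G Stmt19H
set_option linter.unusedSectionVars false
set_option linter.unnecessarySimpa false

variable {Ω : Type*} [MeasureSpace Ω] [SigmaFinite (volume : Measure Ω)]

lemma integral_conj_mul_self {u₀ : Ω → ℂ} (hu₀norm : (∫ x, ‖u₀ x‖^2) = 1) :
    ∫ y, (starRingEnd ℂ) (u₀ y) * u₀ y = 1 := by
  have hpt : ∀ y, (starRingEnd ℂ) (u₀ y) * u₀ y = ((‖u₀ y‖^2 : ℝ) : ℂ) := by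
    intro y
    rw [mul_comm, Complex.mul_conj, Complex.sq_norm]
  simp_rw [hpt]
  have h2 : (∫ y, ((‖u₀ y‖^2 : ℝ) : ℂ)) = ((∫ y, ‖u₀ y‖^2 : ℝ) : ℂ) := integral_ofReal
  rw [h2, hu₀norm, Complex.ofReal_one]

lemma cross {N a b : ℕ} (ha : a ≤ N) (hb : b ≤ N) {u₀ : Ω → ℂ}
    {χa : (Fin a → Ω) → ℂ} {χb : (Fin b → Ω) → ℂ} (hu : MemLp u₀ 2) (hχa : MemLp χa 2)
    (hχb : MemLp χb 2)
    (hortha : ∀ (i : Fin a) (v : Fin a → Ω),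
      (∫ y, (starRingEnd ℂ) (u₀ y) * χa (Function.update v i y)) = 0)
    (horthb : ∀ (i : Fin b) (v : Fin b → Ω),
      (∫ y, (starRingEnd ℂ) (u₀ y) * χb (Function.update v i y)) = 0)
    (hab : a ≠ b) :
    ∫ x : Fin N → Ω, (starRingEnd ℂ) (symTensor u₀ N a ha χa x) * symTensor u₀ N b hb χb x
      = 0 := by
  rw [reduce ha hb hu hχa hχb]
  have hz : ∀ π : Equiv.Perm (Fin N), ∫ x, itg u₀ N a b ha hb χa χb π x = 0 :=
    offdiag_vanish ha hb hu hχa hχb hortha horthb hab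
  simp_rw [hz]
  simp

lemma diag {N k : ℕ} (hk : k ≤ N) {u₀ : Ω → ℂ} {χa χb : (Fin k → Ω) → ℂ}
    (hu : MemLp u₀ 2) (hu₀norm : (∫ x, ‖u₀ x‖^2) = 1) (hχa : MemLp χa 2) (hχb : MemLp χb 2)
    (hortha : ∀ (i : Fin k) (v : Fin k → Ω),
      (∫ y, (starRingEnd ℂ) (u₀ y) * χa (Function.update v i y)) = 0)
    (hbsym : ∀ (σ : Equiv.Perm (Fin k)) v, χb (v ∘ σ) = χb v) :
    ∫ x : Fin N → Ω, (starRingEnd ℂ) (symTensor u₀ N k hk χa x) * symTensor u₀ N k hk χb x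
      = ∫ v, (starRingEnd ℂ) (χa v) * χb v := by
  classical
  rw [reduce hk hk hu hχa hχb]
  have hunorm : ∫ y, (starRingEnd ℂ) (u₀ y) * u₀ y = 1 := integral_conj_mul_self hu₀norm
  have hterm : ∀ π : Equiv.Perm (Fin N), ∫ x, itg u₀ N k k hk hk χa χb π x
      = if (∀ i : Fin (N - k), (π (E1 N k i)).1 < N - k)
          then ∫ v, (starRingEnd ℂ) (χa v) * χb v else 0 := by
    intro π
    by_cases hπ : ∀ i : Fin (N - k), (π (E1 N k i)).1 < N - k
    · rw [if_pos hπ, diag_value hk hbsym π hπ, hunorm, one_pow, one_mul]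
    · rw [if_neg hπ]
      exact nonstab_vanish hk hu hχa hχb hortha π hπ
  have hsum : (∑ π : Equiv.Perm (Fin N), ∫ x, itg u₀ N k k hk hk χa χb π x)
      = (((N - k).factorial * k.factorial : ℕ) : ℂ) * ∫ v, (starRingEnd ℂ) (χa v) * χb v := by
    simp_rw [hterm]
    rw [← Finset.sum_filter, Finset.sum_const, card_stab N k hk, nsmul_eq_mul]
  rw [hsum]
  set s : ℝ := (Real.sqrt (((N - k).factorial * k.factorial * N.factorial : ℕ) : ℝ))⁻¹ with hs
  have hn : ((((N - k).factorial * k.factorial * N.factorial : ℕ) : ℝ) : ℂ) ≠ 0 := by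
    have h1 : ((N - k).factorial * k.factorial * N.factorial : ℕ) ≠ 0 :=
      Nat.mul_ne_zero (Nat.mul_ne_zero (N - k).factorial_ne_zero k.factorial_ne_zero)
        N.factorial_ne_zero
    simpa using h1
  have hss : s * s = ((((N - k).factorial * k.factorial * N.factorial : ℕ) : ℝ))⁻¹ := by
    rw [hs, ← mul_inv, Real.mul_self_sqrt (Nat.cast_nonneg _)]
  have hone : ((s : ℂ) * s) * ((N.factorial : ℂ) * ((((N - k).factorial * k.factorial : ℕ) : ℂ)))
      = 1 := by
    have h3 : ((N.factorial : ℂ) * (((N - k).factorial * k.factorial : ℕ) : ℂ))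
        = ((((N - k).factorial * k.factorial * N.factorial : ℕ) : ℝ) : ℂ) := by
      push_cast
      ring
    rw [← Complex.ofReal_mul, hss, Complex.ofReal_inv, h3, inv_mul_cancel₀ hn]
  calc (s : ℂ) * (s : ℂ) * ((N.factorial : ℂ) * ((((N - k).factorial * k.factorial : ℕ) : ℂ)
          * ∫ v, (starRingEnd ℂ) (χa v) * χb v))
      = (((s : ℂ) * s) * ((N.factorial : ℂ) * ((((N - k).factorial * k.factorial : ℕ) : ℂ))))
          * ∫ v, (starRingEnd ℂ) (χa v) * χb v := by ring
    _ = ∫ v, (starRingEnd ℂ) (χa v) * χb v := by rw [hone, one_mul]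

set_option maxHeartbeats 1000000 in
lemma memℒp_symTensor {N a : ℕ} (ha : a ≤ N) {u₀ : Ω → ℂ} {χ : (Fin a → Ω) → ℂ}
    (hu : MemLp u₀ 2) (hχ : MemLp χ 2) : MemLp (symTensor u₀ N a ha χ) 2 := by
  have h : symTensor u₀ N a ha χ = fun x =>
      (((Real.sqrt ((Nat.factorial (N - a) * Nat.factorial a * Nat.factorial N : ℕ)))⁻¹ : ℝ) : ℂ)
        * ∑ σ : Equiv.Perm (Fin N), blk u₀ N a ha χ (x ∘ σ) := rfl
  rw [h]
  have hsum : MemLp (fun x : Fin N → Ω => ∑ σ : Equiv.Perm (Fin N), blk u₀ N a ha χ (x ∘ σ))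
      2 volume := memLp_finsetSum _ (fun σ _ => memℒp_blk_comp ha hu hχ σ)
  exact hsum.const_mul _

end Stmt19I

namespace Stmt19J
open Stmt19A Stmt19B Stmt19C Stmt19D Stmt19E Stmt19F Stmt19G Stmt19H Stmt19I
set_option linter.unusedSectionVars false

variable {Ω : Type*} [MeasureSpace Ω] [SigmaFinite (volume : Measure Ω)]

lemma integral_conj_mul_self' {α : Type*} [MeasurableSpace α] {μ : Measure α} (f : α → ℂ) :
    ∫ v, (starRingEnd ℂ) (f v) * f v ∂μ = ((∫ v, ‖f v‖^2 ∂μ : ℝ) : ℂ) := by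
  have hpt : ∀ y, (starRingEnd ℂ) (f y) * f y = ((‖f y‖^2 : ℝ) : ℂ) := fun y => by
    rw [mul_comm, Complex.mul_conj, Complex.sq_norm]
  simp_rw [hpt]
  exact integral_ofReal

end Stmt19J


open Stmt19A Stmt19B Stmt19C Stmt19D Stmt19E Stmt19F Stmt19G Stmt19H Stmt19I Stmt19J in
/-- The map `U_N : Ψ = Σ_k u₀^{⊗(N-k)} ⊗_s ψ_k ↦ ψ₀ ⊕ ⋯ ⊕ ψ_N` is a well-defined unitary
from `⊗_sym^N L²(Ω)` onto `⊕_{n=0}^N ⊗_sym^n 𝔥₊`: the blocks `u₀^{⊗(N-k)} ⊗_s ψ_k` are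
mutually orthogonal for different `k`, satisfy
`⟨u₀^{⊗(N-k)} ⊗_s ψ_k, u₀^{⊗(N-ℓ)} ⊗_s ψ_ℓ⟩ = δ_{kℓ} ⟨ψ_k, ψ_ℓ⟩`, and consequently
`‖Ψ‖² = Σ_{k=0}^N ‖ψ_k‖²`.  Here `u₀` is a unit vector of `L²(Ω)` and the `ψ_k` are
symmetric `L²` functions of `k` variables each of whose slots is orthogonal to `u₀`. -/
theorem stmt19 {Ω : Type*} [MeasureSpace Ω] [SigmaFinite (volume : Measure Ω)]
    (N : ℕ) (u₀ : Ω → ℂ) (hu₀ : MemLp u₀ 2) (hu₀norm : (∫ x, ‖u₀ x‖^2) = 1)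
    -- a pair of excitation vectors of orders k and ℓ
    (k ℓ : ℕ) (hk : k ≤ N) (hℓ : ℓ ≤ N)
    (ψk φk : (Fin k → Ω) → ℂ) (ψℓ : (Fin ℓ → Ω) → ℂ)
    (hψk2 : MemLp ψk 2) (hφk2 : MemLp φk 2) (hψℓ2 : MemLp ψℓ 2)
    (hψksym : ∀ (σ : Equiv.Perm (Fin k)) v, ψk (v ∘ σ) = ψk v)
    (hφksym : ∀ (σ : Equiv.Perm (Fin k)) v, φk (v ∘ σ) = φk v)
    (hψℓsym : ∀ (σ : Equiv.Perm (Fin ℓ)) v, ψℓ (v ∘ σ) = ψℓ v)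
    (hψkorth : ∀ (i : Fin k) (v : Fin k → Ω),
      (∫ y, (starRingEnd ℂ) (u₀ y) * ψk (Function.update v i y)) = 0)
    (hφkorth : ∀ (i : Fin k) (v : Fin k → Ω),
      (∫ y, (starRingEnd ℂ) (u₀ y) * φk (Function.update v i y)) = 0)
    (hψℓorth : ∀ (i : Fin ℓ) (v : Fin ℓ → Ω),
      (∫ y, (starRingEnd ℂ) (u₀ y) * ψℓ (Function.update v i y)) = 0)
    -- a full family of excitation vectors ψ_0, …, ψ_N
    (ψ : (m : Fin (N + 1)) → (Fin m.1 → Ω) → ℂ)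
    (hψ2 : ∀ m, MemLp (ψ m) 2)
    (hψsym : ∀ m (σ : Equiv.Perm (Fin m.1)) v, ψ m (v ∘ σ) = ψ m v)
    (hψorth : ∀ m (i : Fin m.1) (v : Fin m.1 → Ω),
      (∫ y, (starRingEnd ℂ) (u₀ y) * ψ m (Function.update v i y)) = 0) :
    -- orthogonality of the blocks for k ≠ ℓ
    (k ≠ ℓ → (∫ x : Fin N → Ω,
        (starRingEnd ℂ) (symTensor u₀ N k hk ψk x) * symTensor u₀ N ℓ hℓ ψℓ x) = 0) ∧
    -- isometry on each block: ⟨u₀^{⊗(N-k)} ⊗_s ψ_k, u₀^{⊗(N-k)} ⊗_s φ_k⟩ = ⟨ψ_k, φ_k⟩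
    ((∫ x : Fin N → Ω,
        (starRingEnd ℂ) (symTensor u₀ N k hk ψk x) * symTensor u₀ N k hk φk x)
      = ∫ v : Fin k → Ω, (starRingEnd ℂ) (ψk v) * φk v) ∧
    -- Parseval: ‖Σ_k u₀^{⊗(N-k)} ⊗_s ψ_k‖² = Σ_k ‖ψ_k‖²
    ((∫ x : Fin N → Ω, ‖∑ m : Fin (N + 1), symTensor u₀ N m m.is_le (ψ m) x‖^2)
      = ∑ m : Fin (N + 1), ∫ v : Fin m.1 → Ω, ‖ψ m v‖^2) := by
  refine ⟨fun hkl => cross hk hℓ hu₀ hψk2 hψℓ2 hψkorth hψℓorth hkl,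
    diag hk hu₀ hu₀norm hψk2 hφk2 hψkorth hφksym, ?_⟩
  classical
  set T : Fin (N + 1) → (Fin N → Ω) → ℂ := fun m => symTensor u₀ N m.1 m.is_le (ψ m) with hT
  have hTm : ∀ m, MemLp (T m) 2 := fun m => memℒp_symTensor _ hu₀ (hψ2 m)
  have hJ : ∀ m m', Integrable (fun x : Fin N → Ω =>
      (starRingEnd ℂ) (T m x) * T m' x) volume :=
    fun m m' => integrable_mul_L2 (memℒp_conj (hTm m)) (hTm m')
  have h2 : (∫ x : Fin N → Ω, (starRingEnd ℂ) (∑ m, T m x) * (∑ m, T m x))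
      = ∑ m : Fin (N + 1), ((∫ v : Fin m.1 → Ω, ‖ψ m v‖^2 : ℝ) : ℂ) := by
    have hpt : ∀ x : Fin N → Ω, (starRingEnd ℂ) (∑ m, T m x) * (∑ m, T m x)
        = ∑ m, ∑ m', (starRingEnd ℂ) (T m x) * T m' x := by
      intro x
      rw [map_sum, Finset.sum_mul_sum]
    simp_rw [hpt]
    rw [integral_finset_sum _ (fun m _ => integrable_finset_sum _ (fun m' _ => hJ m m'))]
    refine Finset.sum_congr rfl fun m _ => ?_
    rw [integral_finset_sum _ (fun m' _ => hJ m m')]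
    rw [Finset.sum_eq_single m (fun m' _ hne => ?_) (fun hnm => absurd (Finset.mem_univ m) hnm)]
    · rw [show T m = symTensor u₀ N m.1 m.is_le (ψ m) from rfl]
      rw [diag m.is_le hu₀ hu₀norm (hψ2 m) (hψ2 m) (hψorth m) (hψsym m)]
      exact integral_conj_mul_self' (ψ m)
    · exact cross m.is_le m'.is_le hu₀ (hψ2 m) (hψ2 m') (hψorth m) (hψorth m')
        (fun hc => hne (Fin.ext hc.symm))
  have h1 : ((∫ x : Fin N → Ω, ‖∑ m, T m x‖^2 : ℝ) : ℂ)
      = ∫ x : Fin N → Ω, (starRingEnd ℂ) (∑ m, T m x) * (∑ m, T m x) :=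
    (integral_conj_mul_self' _).symm
  apply Complex.ofReal_injective
  rw [h1, h2]
  push_cast
  rfl
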